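/- arXiv:1606.09155 — 4 statements merged into one kernel-verified Lean document; each statement's English description precedes it below -/
import Mathlib

section
/- Let F : E → ℝ, x*, x̃ ∈ E, λ* ∈ H and ε ≥ 0, ρ > 0 with ‖λ*‖ < ρ. Suppose F(x) − F(x*) − ⟨λ*, A x − b⟩ ≥ 0 for all x ∈ E (the KKT saddle inequality), and F(x̃) − F(x*) + ρ‖A x̃ − b‖ ≤ ε. Then ‖A x̃ − b‖ ≤ ε/(ρ − ‖λ*‖), and −‖λ*‖ε/(ρ − ‖λ*‖) ≤ F(x̃) − F(x*) ≤ ε. -/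
open scoped RealInnerProductSpace

/-- From the KKT saddle inequality and
`F(x̃) − F(x*) + ρ‖A x̃ − b‖ ≤ ε` with `‖λ*‖ < ρ`, deduce
`‖A x̃ − b‖ ≤ ε/(ρ − ‖λ*‖)` and `−‖λ*‖ε/(ρ − ‖λ*‖) ≤ F(x̃) − F(x*) ≤ ε`. -/
theorem stmt_2 {E H : Type*}
    [NormedAddCommGroup E] [InnerProductSpace ℝ E] [FiniteDimensional ℝ E]
    [NormedAddCommGroup H] [InnerProductSpace ℝ H] [FiniteDimensional ℝ H]
    (A : E →L[ℝ] H) (b : H) (F : E → ℝ)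
    (xs xt : E) (ls : H) (ε ρ : ℝ)
    (hε : 0 ≤ ε) (hρ : 0 < ρ) (hls : ‖ls‖ < ρ)
    (hkkt : ∀ x : E, 0 ≤ F x - F xs - ⟪ls, A x - b⟫)
    (hineq : F xt - F xs + ρ * ‖A xt - b‖ ≤ ε) :
    ‖A xt - b‖ ≤ ε / (ρ - ‖ls‖) ∧
      -(‖ls‖ * ε / (ρ - ‖ls‖)) ≤ F xt - F xs ∧ F xt - F xs ≤ ε := by
  have h1 : -(‖ls‖ * ‖A xt - b‖) ≤ ⟪ls, A xt - b⟫ := by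
    have := abs_real_inner_le_norm ls (A xt - b)
    linarith [neg_abs_le (⟪ls, A xt - b⟫ : ℝ)]
  have h2 : -(‖ls‖ * ‖A xt - b‖) ≤ F xt - F xs := by
    have := hkkt xt; linarith
  have hρls : 0 < ρ - ‖ls‖ := by linarith
  have hnorm : ‖A xt - b‖ ≤ ε / (ρ - ‖ls‖) := by
    rw [le_div_iff₀ hρls]; nlinarith
  refine ⟨hnorm, ?_, ?_⟩
  · have : -(‖ls‖ * (ε / (ρ - ‖ls‖))) ≤ -(‖ls‖ * ‖A xt - b‖) := by
      have := norm_nonneg ls; nlinarith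
    rw [mul_div_assoc]; linarith
  · nlinarith [norm_nonneg (A xt - b)]
end

section
/- Let f : E → ℝ be convex and differentiable with L_f-Lipschitz gradient (L_f ≥ 0). Let α ∈ [0,1] and x̄, xᵏ, x⁺, x ∈ E, and set x̂ = (1−α)x̄ + α xᵏ and x̄⁺ = (1−α)x̄ + α x⁺. Then f(x̄⁺) ≤ (1−α) f(x̄) + α f(x) + α ⟨∇f(x̂), x⁺ − x⟩ + (α² L_f / 2) ‖x⁺ − xᵏ‖². -/
open scoped RealInnerProductSpace

section Aux

variable {E : Type*} [NormedAddCommGroup E] [InnerProductSpace ℝ E] [CompleteSpace E]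

lemma aux_hasDerivAt (f : E → ℝ) (f' : E → E)
    (hgrad : ∀ x : E, HasGradientAt f (f' x) x) (a b : E) (t : ℝ) :
    HasDerivAt (fun s : ℝ => f (a + s • (b - a))) ⟪f' (a + t • (b - a)), b - a⟫ t := by
  have hc : HasDerivAt (fun s : ℝ => a + s • (b - a)) (b - a) t := by
    simpa using ((hasDerivAt_id t).smul_const (b - a)).const_add a
  have hF := (hgrad (a + t • (b - a))).hasFDerivAt
  have := hF.comp_hasDerivAt t hc
  simpa [InnerProductSpace.toDual_apply_apply, Function.comp_def] using this

/-- Gradient inequality for convex functions. -/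
lemma aux_convex_grad (f : E → ℝ) (f' : E → E)
    (hconv : ConvexOn ℝ Set.univ f)
    (hgrad : ∀ x : E, HasGradientAt f (f' x) x) (a b : E) :
    f a + ⟪f' a, b - a⟫ ≤ f b := by
  set g : ℝ → ℝ := fun s => f (a + s • (b - a)) with hg
  have hgc : ConvexOn ℝ Set.univ g := by
    have h1 := hconv.comp_affineMap (AffineMap.lineMap a b)
    have h2 : (f ∘ ⇑(AffineMap.lineMap a b)) = g := by
      ext s
      simp only [Function.comp_apply, AffineMap.lineMap_apply_module, hg]
      congr 1
      module
    rw [h2, Set.preimage_univ] at h1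
    exact h1
  have hd : HasDerivAt g ⟪f' a, b - a⟫ 0 := by
    simpa using aux_hasDerivAt f f' hgrad a b 0
  have := hgc.le_slope_of_hasDerivAt (Set.mem_univ (0:ℝ)) (Set.mem_univ (1:ℝ))
    one_pos hd
  have hs : slope g 0 1 = f b - f a := by
    simp [slope, hg]
  rw [hs] at this
  linarith

/-- Descent lemma. -/
lemma aux_descent (f : E → ℝ) (f' : E → E) (Lf : ℝ)
    (hgrad : ∀ x : E, HasGradientAt f (f' x) x)
    (hlip : ∀ x x' : E, ‖f' x - f' x'‖ ≤ Lf * ‖x - x'‖) (a b : E) :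
    f b ≤ f a + ⟪f' a, b - a⟫ + Lf / 2 * ‖b - a‖ ^ 2 := by
  set c : ℝ := ⟪f' a, b - a⟫ with hc
  set h : ℝ → ℝ := fun s => f (a + s • (b - a)) - s * c - s ^ 2 * (Lf * ‖b - a‖ ^ 2) / 2
    with hh
  have hd : ∀ t : ℝ, HasDerivAt h
      (⟪f' (a + t • (b - a)), b - a⟫ - c - t * (Lf * ‖b - a‖ ^ 2)) t := by
    intro t
    have h1 := aux_hasDerivAt f f' hgrad a b t
    have h2 : HasDerivAt (fun s : ℝ => s * c) c t := by
      simpa using (hasDerivAt_id t).mul_const c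
    have h3 : HasDerivAt (fun s : ℝ => s ^ 2 * (Lf * ‖b - a‖ ^ 2) / 2)
        (t * (Lf * ‖b - a‖ ^ 2)) t := by
      have := ((hasDerivAt_pow 2 t).mul_const (Lf * ‖b - a‖ ^ 2)).div_const 2
      rw [show t * (Lf * ‖b - a‖ ^ 2) = ((2 : ℕ) : ℝ) * t ^ (2 - 1) * (Lf * ‖b - a‖ ^ 2) / 2 by
        push_cast; ring]
      exact this
    exact (h1.sub h2).sub h3
  have hanti : AntitoneOn h (Set.Icc 0 1) := by
    apply antitoneOn_of_deriv_nonpos (convex_Icc 0 1)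
    · exact Continuous.continuousOn (by
        have : Continuous h := by
          have : Differentiable ℝ h := fun t => (hd t).differentiableAt
          exact this.continuous
        exact this)
    · intro t ht
      exact (hd t).differentiableAt.differentiableWithinAt
    · intro t ht
      rw [(hd t).deriv]
      simp only [interior_Icc, Set.mem_Ioo] at ht
      have key : ⟪f' (a + t • (b - a)), b - a⟫ - c ≤ t * (Lf * ‖b - a‖ ^ 2) := by
        have h1 : ⟪f' (a + t • (b - a)), b - a⟫ - c
            = ⟪f' (a + t • (b - a)) - f' a, b - a⟫ := by
          rw [hc, inner_sub_left]
        rw [h1]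
        calc ⟪f' (a + t • (b - a)) - f' a, b - a⟫
            ≤ ‖f' (a + t • (b - a)) - f' a‖ * ‖b - a‖ := real_inner_le_norm _ _
          _ ≤ Lf * ‖a + t • (b - a) - a‖ * ‖b - a‖ := by
              apply mul_le_mul_of_nonneg_right _ (norm_nonneg _)
              exact hlip _ _
          _ = t * (Lf * ‖b - a‖ ^ 2) := by
              rw [show a + t • (b - a) - a = t • (b - a) by abel,
                norm_smul, Real.norm_eq_abs, abs_of_nonneg ht.1.le]
              ring
      linarith
  have h01 := hanti (Set.left_mem_Icc.2 zero_le_one) (Set.right_mem_Icc.2 zero_le_one)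
    zero_le_one
  simp [hh] at h01
  linarith

end Aux

/-- For convex `f` with `L_f`-Lipschitz gradient, with
`x̂ = (1−α)x̄ + α xᵏ` and `x̄⁺ = (1−α)x̄ + α x⁺`,
`f(x̄⁺) ≤ (1−α) f(x̄) + α f(x) + α ⟨∇f(x̂), x⁺ − x⟩ + (α² L_f / 2) ‖x⁺ − xᵏ‖²`. -/
theorem stmt_3 {E : Type*}
    [NormedAddCommGroup E] [InnerProductSpace ℝ E] [FiniteDimensional ℝ E]
    (f : E → ℝ) (f' : E → E) (Lf : ℝ) (hLf : 0 ≤ Lf)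
    (hconv : ConvexOn ℝ Set.univ f)
    (hgrad : ∀ x : E, HasGradientAt f (f' x) x)
    (hlip : ∀ x x' : E, ‖f' x - f' x'‖ ≤ Lf * ‖x - x'‖)
    (α : ℝ) (hα0 : 0 ≤ α) (hα1 : α ≤ 1)
    (xb xk xp x : E) :
    f ((1 - α) • xb + α • xp) ≤
      (1 - α) * f xb + α * f x
        + α * ⟪f' ((1 - α) • xb + α • xk), xp - x⟫
        + α ^ 2 * Lf / 2 * ‖xp - xk‖ ^ 2 := by
  set xh : E := (1 - α) • xb + α • xk with hxh
  set g : E := f' xh with hg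
  -- descent lemma at x̂ with b = x̄⁺
  have hbp : (1 - α) • xb + α • xp - xh = α • (xp - xk) := by
    rw [hxh]; module
  have hdesc := aux_descent f f' Lf hgrad hlip xh ((1 - α) • xb + α • xp)
  rw [hbp] at hdesc
  have hdesc' : f ((1 - α) • xb + α • xp) ≤
      f xh + α * ⟪g, xp - xk⟫ + α ^ 2 * Lf / 2 * ‖xp - xk‖ ^ 2 := by
    have hn : ‖α • (xp - xk)‖ ^ 2 = α ^ 2 * ‖xp - xk‖ ^ 2 := by
      rw [norm_smul, Real.norm_eq_abs, mul_pow, sq_abs]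
    rw [real_inner_smul_right, hn] at hdesc
    calc f ((1 - α) • xb + α • xp) ≤
        f xh + α * ⟪g, xp - xk⟫ + Lf / 2 * (α ^ 2 * ‖xp - xk‖ ^ 2) := hdesc
      _ = f xh + α * ⟪g, xp - xk⟫ + α ^ 2 * Lf / 2 * ‖xp - xk‖ ^ 2 := by ring
  -- convexity inequalities
  have hcb := aux_convex_grad f f' hconv hgrad xh xb
  have hcx := aux_convex_grad f f' hconv hgrad xh x
  -- combine with weights (1-α), α
  have hcomb : f xh + (1 - α) * ⟪g, xb - xh⟫ + α * ⟪g, x - xh⟫ ≤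
      (1 - α) * f xb + α * f x := by
    nlinarith [hcb, hcx]
  have hkey : (1 - α) * ⟪g, xb - xh⟫ + α * ⟪g, x - xh⟫
      = α * ⟪g, x - xk⟫ := by
    rw [← real_inner_smul_right, ← real_inner_smul_right, ← real_inner_smul_right,
      ← inner_add_right]
    congr 1
    rw [hxh]; module
  have hsplit : ⟪g, xp - xk⟫ = ⟪g, x - xk⟫ + ⟪g, xp - x⟫ := by
    rw [← inner_add_right]; congr 1; abel
  rw [hsplit] at hdesc'
  ring_nf at hdesc' hcomb hkey ⊢
  linarith
end

section
/- (One-iteration result for linearized ALM.) Let α ∈ [0,1], β ≥ 0, γ > 0, and let P be a self-adjoint operator on E. Given xᵏ, x̄ᵏ ∈ E and λᵏ ∈ H, set x̂ᵏ = (1−α)x̄ᵏ + α xᵏ; suppose x^{k+1} ∈ E satisfies the optimality condition: there is a subgradient u of g at x^{k+1} with ∇f(x̂ᵏ) + u − A*λᵏ + β A*(A x^{k+1} − b) + P(x^{k+1} − xᵏ) = 0; set x̄^{k+1} = (1−α)x̄ᵏ + α x^{k+1} and λ^{k+1} = λᵏ − γ(A x^{k+1} − b). Then for every x ∈ E with A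 x = b and every λ ∈ H: [F(x̄^{k+1}) − F(x) − ⟨λ, A x̄^{k+1} − b⟩] − (1−α)[F(x̄ᵏ) − F(x) − ⟨λ, A x̄ᵏ − b⟩] ≤ −(α/2)[‖x^{k+1} − x‖²_P − ‖xᵏ − x‖²_P + ‖x^{k+1} − xᵏ‖²_P] + (α² L_f / 2)‖x^{k+1} − xᵏ‖² + (α/(2γ))[‖λᵏ − λ‖² − ‖λ^{k+1} − λ‖² + ‖λ^{k+1} − λᵏ‖²] − (αβ/γ²)‖λ^{k+1} − λᵏ‖². -/
open scoped RealInnerProductSpace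



section helpers
variable {E : Type*} [NormedAddCommGroup E] [InnerProductSpace ℝ E] [CompleteSpace E]

lemma line_hasDerivAt (f : E → ℝ) (f' : E → E) (hgrad : ∀ z : E, HasGradientAt f (f' z) z)
    (x v : E) (t : ℝ) :
    HasDerivAt (fun s : ℝ => f (x + s • v)) ⟪f' (x + t • v), v⟫ t := by
  have hc : HasDerivAt (fun s : ℝ => x + s • v) v t := by
    simpa using ((hasDerivAt_id t).smul_const v).const_add x
  have hf := (hasGradientAt_iff_hasFDerivAt.mp (hgrad (x + t • v)))
  have := hf.comp_hasDerivAt t hc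
  simpa [InnerProductSpace.toDual_apply_apply, Function.comp_def] using this

lemma grad_convex_ineq (f : E → ℝ) (f' : E → E)
    (hfconv : ConvexOn ℝ Set.univ f)
    (hgrad : ∀ z : E, HasGradientAt f (f' z) z) (x y : E) :
    f x + ⟪f' x, y - x⟫ ≤ f y := by
  set v := y - x with hv
  have hxy : x + v = y := by simp [hv]
  have hφconv : ConvexOn ℝ Set.univ (fun t : ℝ => f (x + t • v)) := by
    have := hfconv.comp_affineMap (AffineMap.lineMap x y : ℝ →ᵃ[ℝ] E)
    simpa [Function.comp_def, AffineMap.lineMap_apply, hv, add_comm] using this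
  have hd : HasDerivAt (fun t : ℝ => f (x + t • v)) ⟪f' x, v⟫ 0 := by
    simpa using line_hasDerivAt f f' hgrad x v 0
  have hs := hφconv.le_slope_of_hasDerivAt (Set.mem_univ 0) (Set.mem_univ 1) one_pos hd
  rw [slope_def_field] at hs
  simp [hxy] at hs
  linarith [hs]

lemma descent_lemma (f : E → ℝ) (f' : E → E) (Lf : ℝ)
    (hgrad : ∀ z : E, HasGradientAt f (f' z) z)
    (hlip : ∀ x x' : E, ‖f' x - f' x'‖ ≤ Lf * ‖x - x'‖) (x y : E) :
    f y ≤ f x + ⟪f' x, y - x⟫ + Lf / 2 * ‖y - x‖ ^ 2 := by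
  set v := y - x with hv
  have hxy : x + v = y := by simp [hv]
  set K : ℝ := ⟪f' x, v⟫ with hK
  set C : ℝ := Lf / 2 * ‖v‖ ^ 2 with hC
  set φ : ℝ → ℝ := fun t => f (x + t • v) - t * K - C * t ^ 2 with hφ
  have hd : ∀ t : ℝ, HasDerivAt φ (⟪f' (x + t • v), v⟫ - K - C * (2 * t)) t := by
    intro t
    have hp : HasDerivAt (fun s : ℝ => C * s ^ 2) (C * (2 * t)) t := by
      have := (hasDerivAt_pow 2 t).const_mul C
      simpa [mul_comm, mul_assoc, mul_left_comm] using this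
    have := ((line_hasDerivAt f f' hgrad x v t).sub
      ((hasDerivAt_id t).mul_const K)).sub hp
    simpa [hφ, Pi.sub_def] using this
  have hdiff : Differentiable ℝ φ := fun t => (hd t).differentiableAt
  have hderiv_nonpos : ∀ t ∈ interior (Set.Icc (0:ℝ) 1), deriv φ t ≤ 0 := by
    intro t ht
    rw [interior_Icc] at ht
    rw [(hd t).deriv]
    have h1 : ⟪f' (x + t • v), v⟫ - K = ⟪f' (x + t • v) - f' x, v⟫ := by
      rw [inner_sub_left]
    have h2 : ⟪f' (x + t • v) - f' x, v⟫ ≤ ‖f' (x + t • v) - f' x‖ * ‖v‖ :=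
      real_inner_le_norm _ _
    have h3 : ‖f' (x + t • v) - f' x‖ ≤ Lf * ‖x + t • v - x‖ := hlip _ _
    have h4 : ‖x + t • v - x‖ = t * ‖v‖ := by
      simp [norm_smul, abs_of_nonneg ht.1.le]
    have h5 : ‖f' (x + t • v) - f' x‖ * ‖v‖ ≤ Lf * (t * ‖v‖) * ‖v‖ := by
      apply mul_le_mul_of_nonneg_right _ (norm_nonneg v)
      rw [← h4]; exact h3
    have : C * (2 * t) = Lf * (t * ‖v‖) * ‖v‖ := by rw [hC]; ring
    linarith [h1 ▸ (h2.trans h5)]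
  have hanti : AntitoneOn φ (Set.Icc (0:ℝ) 1) :=
    antitoneOn_of_deriv_nonpos (convex_Icc 0 1) hdiff.continuous.continuousOn
      (hdiff.differentiableOn) hderiv_nonpos
  have h10 := hanti (Set.mem_Icc.mpr ⟨le_refl 0, zero_le_one⟩)
      (Set.mem_Icc.mpr ⟨zero_le_one, le_refl 1⟩) zero_le_one
  simp [hφ, hxy] at h10
  linarith [h10]

end helpers

/-- One-iteration result for the linearized ALM (Lemma 2.4 in the paper). -/
theorem stmt_4 {E H : Type*}
    [NormedAddCommGroup E] [InnerProductSpace ℝ E] [FiniteDimensional ℝ E]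
    [NormedAddCommGroup H] [InnerProductSpace ℝ H] [FiniteDimensional ℝ H]
    (A : E →L[ℝ] H) (b : H)
    (f : E → ℝ) (f' : E → E) (Lf : ℝ) (hLf : 0 ≤ Lf)
    (hfconv : ConvexOn ℝ Set.univ f)
    (hgrad : ∀ x : E, HasGradientAt f (f' x) x)
    (hlip : ∀ x x' : E, ‖f' x - f' x'‖ ≤ Lf * ‖x - x'‖)
    (g : E → ℝ) (hgconv : ConvexOn ℝ Set.univ g)
    (α β γ : ℝ) (hα0 : 0 ≤ α) (hα1 : α ≤ 1) (hβ : 0 ≤ β) (hγ : 0 < γ)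
    (P : E →L[ℝ] E) (hP : IsSelfAdjoint P)
    (xk xbk : E) (lamk : H)
    (xhk : E) (hxhk : xhk = (1 - α) • xbk + α • xk)
    (xk1 : E)
    (hopt : ∃ u : E,
      (∀ x' : E, g x' ≥ g xk1 + ⟪u, x' - xk1⟫) ∧
      f' xhk + u - (ContinuousLinearMap.adjoint A) lamk
        + β • (ContinuousLinearMap.adjoint A) (A xk1 - b)
        + P (xk1 - xk) = 0)
    (xbk1 : E) (hxbk1 : xbk1 = (1 - α) • xbk + α • xk1)
    (lamk1 : H) (hlamk1 : lamk1 = lamk - γ • (A xk1 - b)) :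
    ∀ x : E, A x = b → ∀ lam : H,
      ((f xbk1 + g xbk1) - (f x + g x) - ⟪lam, A xbk1 - b⟫)
          - (1 - α) * ((f xbk + g xbk) - (f x + g x) - ⟪lam, A xbk - b⟫)
        ≤ -(α / 2) * (⟪xk1 - x, P (xk1 - x)⟫ - ⟪xk - x, P (xk - x)⟫
              + ⟪xk1 - xk, P (xk1 - xk)⟫)
          + α ^ 2 * Lf / 2 * ‖xk1 - xk‖ ^ 2
          + α / (2 * γ) * (‖lamk - lam‖ ^ 2 - ‖lamk1 - lam‖ ^ 2 + ‖lamk1 - lamk‖ ^ 2)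
          - α * β / γ ^ 2 * ‖lamk1 - lamk‖ ^ 2 := by
  intro x hx lam
  obtain ⟨u, hu, heq⟩ := hopt
  set r : H := A xk1 - b with hr
  have hγ' : (γ : ℝ) ≠ 0 := ne_of_gt hγ
  -- symmetry of P
  have hsym : ∀ p q : E, ⟪P p, q⟫ = ⟪p, P q⟫ :=
    fun p q => (ContinuousLinearMap.isSelfAdjoint_iff_isSymmetric.mp hP) p q
  -- A (xk1 - x) = r
  have hAw : A (xk1 - x) = r := by rw [map_sub, hx, hr]
  -- optimality condition in inner product form
  have hlin : ⟪f' xhk, xk1 - x⟫ + ⟪u, xk1 - x⟫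
      = ⟪lamk, r⟫ - β * ‖r‖ ^ 2 - ⟪P (xk1 - xk), xk1 - x⟫ := by
    have h0 : ⟪f' xhk + u - (ContinuousLinearMap.adjoint A) lamk
        + β • (ContinuousLinearMap.adjoint A) r + P (xk1 - xk), xk1 - x⟫ = 0 := by
      rw [heq]; exact inner_zero_left _
    simp only [inner_add_left, inner_sub_left, real_inner_smul_left,
      ContinuousLinearMap.adjoint_inner_left, hAw, real_inner_self_eq_norm_sq] at h0
    linarith
  -- lambda identities
  have hlamdiff : lamk1 - lamk = -(γ • r) := by rw [hlamk1]; abel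
  have e1 : ‖lamk1 - lamk‖ ^ 2 = γ ^ 2 * ‖r‖ ^ 2 := by
    rw [hlamdiff, norm_neg, norm_smul, Real.norm_eq_abs, mul_pow, sq_abs]
  have e2 : ‖lamk - lam‖ ^ 2 - ‖lamk1 - lam‖ ^ 2 + ‖lamk1 - lamk‖ ^ 2
      = 2 * γ * ⟪lamk - lam, r⟫ := by
    have h1 : ‖lamk1 - lam‖ ^ 2 = ‖(lamk - lam) - γ • r‖ ^ 2 := by
      rw [show lamk1 - lam = (lamk - lam) - γ • r by rw [hlamk1]; abel]
    have hA2 := norm_sub_sq_real (lamk - lam) (γ • r)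
    have hs2 : ⟪lamk - lam, γ • r⟫ = γ * ⟪lamk - lam, r⟫ := real_inner_smul_right _ _ _
    have hn2 : ‖γ • r‖ ^ 2 = γ ^ 2 * ‖r‖ ^ 2 := by
      rw [norm_smul, Real.norm_eq_abs, mul_pow, sq_abs]
    rw [e1]
    nlinarith [hA2, hs2, hn2, h1]
  -- inner decomposition for lam terms
  have hlam : ⟪lam, A xbk1 - b⟫ = (1 - α) * ⟪lam, A xbk - b⟫ + α * ⟪lam, r⟫ := by
    have : A xbk1 - b = (1 - α) • (A xbk - b) + α • r := by
      rw [hxbk1, map_add, map_smul, map_smul, hr]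
      module
    rw [this, inner_add_right, real_inner_smul_right, real_inner_smul_right]
  -- P identity
  have hPid : ⟪P (xk1 - xk), xk1 - x⟫
      = (⟪xk1 - x, P (xk1 - x)⟫ - ⟪xk - x, P (xk - x)⟫ + ⟪xk1 - xk, P (xk1 - xk)⟫) / 2 := by
    have hv : xk1 - xk = (xk1 - x) - (xk - x) := by abel
    have ea : ⟪xk1 - x, P (xk1 - x)⟫ = ⟪P (xk1 - x), xk1 - x⟫ := real_inner_comm _ _
    have ec : ⟪xk - x, P (xk - x)⟫ = ⟪P (xk - x), xk - x⟫ := real_inner_comm _ _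
    have h1 : ⟪P (xk1 - xk), xk1 - x⟫
        = ⟪P (xk1 - x), xk1 - x⟫ - ⟪P (xk - x), xk1 - x⟫ := by
      rw [hv, map_sub, inner_sub_left]
    have h2 : ⟪xk1 - xk, P (xk1 - xk)⟫
        = ⟪xk1 - x, P (xk1 - x)⟫ - ⟪xk1 - x, P (xk - x)⟫
          - ⟪xk - x, P (xk1 - x)⟫ + ⟪xk - x, P (xk - x)⟫ := by
      rw [hv, map_sub, inner_sub_right]
      simp only [inner_sub_left]
      ring
    have hc1 : ⟪xk - x, P (xk1 - x)⟫ = ⟪P (xk - x), xk1 - x⟫ := (hsym (xk - x) (xk1 - x)).symm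
    have hc2 : ⟪xk1 - x, P (xk - x)⟫ = ⟪xk - x, P (xk1 - x)⟫ := by
      rw [← hsym, real_inner_comm]
    linarith
  -- vector identities
  have hv1 : xbk1 - xhk = α • (xk1 - xk) := by rw [hxbk1, hxhk]; module
  have hn1 : ‖xbk1 - xhk‖ ^ 2 = α ^ 2 * ‖xk1 - xk‖ ^ 2 := by
    rw [hv1, norm_smul, Real.norm_eq_abs, mul_pow, sq_abs]
  have hinner : ⟪f' xhk, xbk1 - xhk⟫
      = (1 - α) * ⟪f' xhk, xbk - xhk⟫ + α * ⟪f' xhk, x - xhk⟫ + α * ⟪f' xhk, xk1 - x⟫ := by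
    have : xbk1 - xhk = (1 - α) • (xbk - xhk) + (α • (x - xhk) + α • (xk1 - x)) := by
      rw [hxbk1, hxhk]; module
    rw [this, inner_add_right, inner_add_right, real_inner_smul_right,
      real_inner_smul_right, real_inner_smul_right]
    ring
  -- convexity / descent inequalities
  have hfa := grad_convex_ineq f f' hfconv hgrad xhk xbk
  have hfb := grad_convex_ineq f f' hfconv hgrad xhk x
  have hfc := descent_lemma f f' Lf hgrad hlip xhk xbk1
  rw [hn1] at hfc
  have hfa' : (1 - α) * (f xhk + ⟪f' xhk, xbk - xhk⟫) ≤ (1 - α) * f xbk :=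
    mul_le_mul_of_nonneg_left hfa (by linarith)
  have hfb' : α * (f xhk + ⟪f' xhk, x - xhk⟫) ≤ α * f x :=
    mul_le_mul_of_nonneg_left hfb hα0
  have hg1 : g xbk1 ≤ (1 - α) * g xbk + α * g xk1 := by
    rw [hxbk1]
    exact hgconv.2 (Set.mem_univ xbk) (Set.mem_univ xk1) (by linarith) hα0 (by ring)
  have hg2 : g xk1 ≤ g x + ⟪u, xk1 - x⟫ := by
    have := hu x
    have hxx : x - xk1 = -(xk1 - x) := by abel
    rw [hxx, inner_neg_right] at this
    linarith
  have hg2' : α * g xk1 ≤ α * (g x + ⟪u, xk1 - x⟫) :=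
    mul_le_mul_of_nonneg_left hg2 hα0
  have hlin' : α * (⟪f' xhk, xk1 - x⟫ + ⟪u, xk1 - x⟫)
      = α * (⟪lamk, r⟫ - β * ‖r‖ ^ 2 - ⟪P (xk1 - xk), xk1 - x⟫) := by rw [hlin]
  -- key inequality
  have key : f xbk1 + g xbk1 - (1 - α) * (f xbk + g xbk) - α * (f x + g x)
      ≤ α * ⟪lamk, r⟫ - α * β * ‖r‖ ^ 2 - α * ⟪P (xk1 - xk), xk1 - x⟫
        + α ^ 2 * Lf / 2 * ‖xk1 - xk‖ ^ 2 := by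
    linarith [hfc, hinner, hfa', hfb', hg1, hg2', hlin']
  -- reductions of the RHS
  have hq1 : α / (2 * γ) * (‖lamk - lam‖ ^ 2 - ‖lamk1 - lam‖ ^ 2 + ‖lamk1 - lamk‖ ^ 2)
      = α * ⟪lamk, r⟫ - α * ⟪lam, r⟫ := by
    rw [e2, inner_sub_left]
    field_simp
  have hq2 : α * β / γ ^ 2 * ‖lamk1 - lamk‖ ^ 2 = α * β * ‖r‖ ^ 2 := by
    rw [e1]; field_simp
  rw [hPid] at key
  linarith [key, hq1, hq2, hlam]
end

section
/- (One-iteration result for linearized ADMM.) Let β ≥ 0, γ > 0, and let P (on Y) and Q (on Z) be self-adjoint operators. Given yᵏ ∈ Y, zᵏ ∈ Z, λᵏ ∈ H, suppose: there is a subgradient u of f at y^{k+1} with u − B*λᵏ + β B*(B y^{k+1} + C zᵏ − b) + P(y^{k+1} − yᵏ) = 0; there is a subgradient v of g at z^{k+1} with v + ∇h(zᵏ) − C*λᵏ + β C*(B y^{k+1} + C z^{k+1} − b) + Q(z^{k+1} − zᵏ) = 0; and λ^{k+1} = λᵏ − γ(B y^{k+1} + C z^{k+1} − b). Then for every (y,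 z, λ) with B y + C z = b: F(y^{k+1}, z^{k+1}) − F(y, z) − ⟨λ, B y^{k+1} + C z^{k+1} − b⟩ ≤ −⟨(1/γ)(λᵏ − λ^{k+1}), λ − λᵏ + (β/γ)(λᵏ − λ^{k+1})⟩ + β⟨(1/γ)(λᵏ − λ^{k+1}) − C(z^{k+1} − z), C(z^{k+1} − zᵏ)⟩ + (L_h/2)‖z^{k+1} − zᵏ‖² − (μ_h/2)‖zᵏ − z‖² − (μ_g/2)‖z^{k+1} − z‖² − ⟨y^{k+1} − y, P(y^{k+1} − yᵏ)⟩ − ⟨z^{k+1} − z, Q(z^{k+1} − zᵏ)⟩. -/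
open scoped RealInnerProductSpace

section Aux

variable {Z : Type*} [NormedAddCommGroup Z] [InnerProductSpace ℝ Z]

lemma combo_sq (x z : Z) (a b : ℝ) (hab : a + b = 1) :
    ‖a • x + b • z‖ ^ 2 = a * ‖x‖ ^ 2 + b * ‖z‖ ^ 2 - a * b * ‖x - z‖ ^ 2 := by
  have hb : b = 1 - a := by linarith
  subst hb
  have h1 : ‖a • x + (1 - a) • z‖ ^ 2 = ‖a • x‖ ^ 2 + 2 * ⟪a • x, (1 - a) • z⟫ + ‖(1 - a) • z‖ ^ 2 :=
    norm_add_sq_real _ _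
  have h2 : ‖x - z‖ ^ 2 = ‖x‖ ^ 2 - 2 * ⟪x, z⟫ + ‖z‖ ^ 2 := norm_sub_sq_real _ _
  have h3 : ‖a • x‖ ^ 2 = a ^ 2 * ‖x‖ ^ 2 := by
    rw [norm_smul]; simp [mul_pow, sq_abs]
  have h4 : ‖(1 - a) • z‖ ^ 2 = (1 - a) ^ 2 * ‖z‖ ^ 2 := by
    rw [norm_smul]; simp [mul_pow, sq_abs]
  rw [h1, h2, h3, h4, real_inner_smul_left, real_inner_smul_right]
  ring

lemma convexOn_half_sq (μ : ℝ) (hμ : 0 ≤ μ) :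
    ConvexOn ℝ (Set.univ : Set Z) (fun z => μ / 2 * ‖z‖ ^ 2) := by
  refine ⟨convex_univ, fun x _ z _ a b ha hb hab => ?_⟩
  simp only [smul_eq_mul]
  rw [combo_sq x z a b hab]
  nlinarith [sq_nonneg ‖x - z‖, mul_nonneg ha hb, mul_nonneg (mul_nonneg ha hb) (sq_nonneg ‖x - z‖)]

lemma strong_subgrad (g : Z → ℝ) (μ : ℝ)
    (hg : ConvexOn ℝ Set.univ (fun z => g z - μ / 2 * ‖z‖ ^ 2))
    (x v : Z) (hv : ∀ z', g z' ≥ g x + ⟪v, z' - x⟫) (z : Z) :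
    g x + ⟪v, z - x⟫ + μ / 2 * ‖z - x‖ ^ 2 ≤ g z := by
  have key : ∀ t : ℝ, t ∈ Set.Ioo (0 : ℝ) 1 →
      g x + ⟪v, z - x⟫ + μ / 2 * (1 - t) * ‖z - x‖ ^ 2 ≤ g z := by
    intro t ht
    have ht0 := ht.1
    have ha : (0:ℝ) ≤ 1 - t := by linarith [ht.2]
    have hb : (0:ℝ) ≤ t := le_of_lt ht.1
    have habs : (1 - t) + t = 1 := by ring
    have hcx := hg.2 (Set.mem_univ x) (Set.mem_univ z) ha hb habs
    simp only [smul_eq_mul] at hcx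
    have hid : ‖(1 - t) • x + t • z‖ ^ 2
        = (1 - t) * ‖x‖ ^ 2 + t * ‖z‖ ^ 2 - (1 - t) * t * ‖x - z‖ ^ 2 :=
      combo_sq x z (1 - t) t habs
    have hsub := hv ((1 - t) • x + t • z)
    have hw : (1 - t) • x + t • z - x = t • (z - x) := by
      rw [smul_sub, sub_smul, one_smul]; abel
    rw [hw, real_inner_smul_right] at hsub
    rw [hid] at hcx
    have hnn : ‖z - x‖ = ‖x - z‖ := norm_sub_rev _ _
    rw [hnn]
    nlinarith [hcx, hsub]
  have hT : Filter.Tendsto (fun t : ℝ => g x + ⟪v, z - x⟫ + μ / 2 * (1 - t) * ‖z - x‖ ^ 2)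
      (nhdsWithin 0 (Set.Ioi 0))
      (nhds (g x + ⟪v, z - x⟫ + μ / 2 * (1 - (0:ℝ)) * ‖z - x‖ ^ 2)) := by
    apply Filter.Tendsto.mono_left _ nhdsWithin_le_nhds
    exact (Continuous.tendsto (by continuity) 0)
  have hev : ∀ᶠ t in nhdsWithin (0:ℝ) (Set.Ioi 0),
      g x + ⟪v, z - x⟫ + μ / 2 * (1 - t) * ‖z - x‖ ^ 2 ≤ g z := by
    filter_upwards [Ioo_mem_nhdsGT_of_mem (by norm_num : (0:ℝ) ∈ Set.Ico (0:ℝ) 1)] with t ht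
    exact key t ht
  have := le_of_tendsto hT hev
  simpa using this

lemma grad_tangent [CompleteSpace Z] (h : Z → ℝ) (hcv : ConvexOn ℝ Set.univ h)
    (x v : Z) (hx : HasGradientAt h v x) (z : Z) :
    h x + ⟪v, z - x⟫ ≤ h z := by
  set φ : ℝ → ℝ := fun t => h (x + t • (z - x)) with hφ
  have hline : HasDerivAt φ ⟪v, z - x⟫ 0 := by
    have h2 : HasDerivAt (fun t : ℝ => x + t • (z - x)) (z - x) 0 := by
      simpa using ((hasDerivAt_id (0:ℝ)).smul_const (z - x)).const_add x
    have h1 : HasFDerivAt h (InnerProductSpace.toDual ℝ Z v) x :=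
      hasGradientAt_iff_hasFDerivAt.mp hx
    have h1' : HasFDerivAt h (InnerProductSpace.toDual ℝ Z v) (x + (0:ℝ) • (z - x)) := by
      simpa using h1
    have hc := h1'.comp_hasDerivAt 0 h2
    simp at hc
    exact hc
  have hslope : Filter.Tendsto (slope φ 0) (nhdsWithin 0 (Set.Ioi 0)) (nhds ⟪v, z - x⟫) :=
    (hasDerivAt_iff_tendsto_slope.mp hline).mono_left
      (nhdsWithin_mono _ (by intro t ht; simp at ht ⊢; exact ne_of_gt ht))
  have hev : ∀ᶠ t in nhdsWithin (0:ℝ) (Set.Ioi 0), slope φ 0 t ≤ h z - h x := by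
    filter_upwards [Ioo_mem_nhdsGT_of_mem (by norm_num : (0:ℝ) ∈ Set.Ico (0:ℝ) 1)] with t ht
    have ht0 := ht.1
    have hcx := hcv.2 (Set.mem_univ x) (Set.mem_univ z) (by linarith [ht.2] : (0:ℝ) ≤ 1 - t)
      (le_of_lt ht0) (by ring)
    simp only [smul_eq_mul] at hcx
    have hw : (1 - t) • x + t • z = x + t • (z - x) := by
      rw [smul_sub, sub_smul, one_smul]; abel
    rw [hw] at hcx
    have hφ0 : φ 0 = h x := by simp [hφ]
    rw [slope_def_field, hφ0, sub_zero, div_le_iff₀ ht0]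
    nlinarith [hcx]
  have hfin := le_of_tendsto hslope hev
  linarith

lemma descent_lemma_s10 [CompleteSpace Z] (h : Z → ℝ) (h' : Z → Z) (L : ℝ)
    (hgrad : ∀ z, HasGradientAt h (h' z) z)
    (hlip : ∀ z z', ‖h' z - h' z'‖ ≤ L * ‖z - z'‖)
    (x d : Z) : h (x + d) ≤ h x + ⟪h' x, d⟫ + L / 2 * ‖d‖ ^ 2 := by
  set φ : ℝ → ℝ := fun t => h (x + t • d) - t * ⟪h' x, d⟫ - L / 2 * t ^ 2 * ‖d‖ ^ 2 with hφ
  have hline : ∀ t : ℝ, HasDerivAt (fun s : ℝ => h (x + s • d)) ⟪h' (x + t • d), d⟫ t := by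
    intro t
    have h2 : HasDerivAt (fun s : ℝ => x + s • d) d t := by
      simpa using ((hasDerivAt_id t).smul_const d).const_add x
    have h1 : HasFDerivAt h (InnerProductSpace.toDual ℝ Z (h' (x + t • d))) (x + t • d) :=
      hasGradientAt_iff_hasFDerivAt.mp (hgrad _)
    have hc := h1.comp_hasDerivAt t h2
    simp at hc
    exact hc
  have hder : ∀ t : ℝ, HasDerivAt φ (⟪h' (x + t • d), d⟫ - ⟪h' x, d⟫ - L * t * ‖d‖ ^ 2) t := by
    intro t
    have ha : HasDerivAt (fun s : ℝ => s * ⟪h' x, d⟫) ⟪h' x, d⟫ t := by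
      simpa using (hasDerivAt_id t).mul_const ⟪h' x, d⟫
    have hb : HasDerivAt (fun s : ℝ => L / 2 * s ^ 2 * ‖d‖ ^ 2) (L * t * ‖d‖ ^ 2) t := by
      have := ((hasDerivAt_pow 2 t).const_mul (L / 2)).mul_const (‖d‖ ^ 2)
      refine this.congr_deriv ?_
      rw [show (2:ℕ) - 1 = 1 from rfl]; push_cast
      ring
    exact ((hline t).sub ha).sub hb
  have hmono : AntitoneOn φ (Set.Icc 0 1) := by
    apply antitoneOn_of_deriv_nonpos (convex_Icc 0 1)
    · exact fun t _ => ((hder t).continuousAt).continuousWithinAt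
    · intro t _
      exact ((hder t).differentiableAt).differentiableWithinAt
    · intro t ht
      rw [interior_Icc] at ht
      rw [(hder t).deriv]
      have h4 : ⟪h' (x + t • d), d⟫ - ⟪h' x, d⟫ = ⟪h' (x + t • d) - h' x, d⟫ :=
        (inner_sub_left _ _ _).symm
      have h1 : ⟪h' (x + t • d) - h' x, d⟫ ≤ ‖h' (x + t • d) - h' x‖ * ‖d‖ :=
        real_inner_le_norm _ _
      have h2 : ‖h' (x + t • d) - h' x‖ ≤ L * ‖t • d‖ := by
        simpa using hlip (x + t • d) x
      have h3 : ‖t • d‖ = t * ‖d‖ := by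
        rw [norm_smul]; simp [abs_of_pos ht.1]
      rw [h3] at h2
      have h5 : ‖h' (x + t • d) - h' x‖ * ‖d‖ ≤ L * t * ‖d‖ * ‖d‖ :=
        mul_le_mul_of_nonneg_right (by linarith) (norm_nonneg d)
      have h6 : ‖d‖ * ‖d‖ = ‖d‖ ^ 2 := (sq ‖d‖).symm
      rw [h4]
      nlinarith [h1, h5]
  have h01 := hmono (Set.mem_Icc.mpr ⟨le_refl 0, zero_le_one⟩)
    (Set.mem_Icc.mpr ⟨zero_le_one, le_refl 1⟩) zero_le_one
  simp only [hφ, one_smul, zero_smul, add_zero, one_pow, one_mul, zero_mul, zero_pow,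
    mul_zero, sub_zero] at h01
  linarith
lemma key_id {H : Type*} [NormedAddCommGroup H] [InnerProductSpace ℝ H]
    (β : ℝ) (lam lamk a c d : H) :
    ⟪lamk, a - c⟫ - β * ⟪a - d, a - c⟫ + ⟪lamk, c⟫ - β * ⟪a, c⟫ - ⟪lam, a⟫
      = -⟪a, lam - lamk + β • a⟫ + β * ⟪a - c, d⟫ := by
  simp only [inner_sub_left, inner_sub_right, inner_add_right, real_inner_smul_right]
  linear_combination real_inner_comm lam a - real_inner_comm lamk a
    + β * real_inner_comm d c - β * real_inner_comm d a

end Aux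

/-- One-iteration result for the linearized ADMM (Lemma 2.9 in the paper). -/
theorem stmt_10 {Y Z H : Type*}
    [NormedAddCommGroup Y] [InnerProductSpace ℝ Y] [FiniteDimensional ℝ Y]
    [NormedAddCommGroup Z] [InnerProductSpace ℝ Z] [FiniteDimensional ℝ Z]
    [NormedAddCommGroup H] [InnerProductSpace ℝ H] [FiniteDimensional ℝ H]
    (B : Y →L[ℝ] H) (C : Z →L[ℝ] H) (b : H)
    (f : Y → ℝ) (hf : ConvexOn ℝ Set.univ f)
    (g : Z → ℝ) (μg : ℝ) (hμg : 0 ≤ μg)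
    (hg : ConvexOn ℝ Set.univ (fun z => g z - μg / 2 * ‖z‖ ^ 2))
    (h : Z → ℝ) (h' : Z → Z) (Lh μh : ℝ) (hLh : 0 ≤ Lh) (hμh : 0 ≤ μh)
    (hh : ConvexOn ℝ Set.univ (fun z => h z - μh / 2 * ‖z‖ ^ 2))
    (hgrad : ∀ z : Z, HasGradientAt h (h' z) z)
    (hlip : ∀ z z' : Z, ‖h' z - h' z'‖ ≤ Lh * ‖z - z'‖)
    (hμ : 0 < μg + μh)
    (β γ : ℝ) (hβ : 0 ≤ β) (hγ : 0 < γ)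
    (P : Y →L[ℝ] Y) (hP : IsSelfAdjoint P)
    (Q : Z →L[ℝ] Z) (hQ : IsSelfAdjoint Q)
    (yk : Y) (zk : Z) (lamk : H) (yk1 : Y) (zk1 : Z) (lamk1 : H)
    (hopty : ∃ u : Y,
      (∀ y' : Y, f y' ≥ f yk1 + ⟪u, y' - yk1⟫) ∧
      u - (ContinuousLinearMap.adjoint B) lamk
        + β • (ContinuousLinearMap.adjoint B) (B yk1 + C zk - b)
        + P (yk1 - yk) = 0)
    (hoptz : ∃ v : Z,
      (∀ z' : Z, g z' ≥ g zk1 + ⟪v, z' - zk1⟫) ∧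
      v + h' zk - (ContinuousLinearMap.adjoint C) lamk
        + β • (ContinuousLinearMap.adjoint C) (B yk1 + C zk1 - b)
        + Q (zk1 - zk) = 0)
    (hlam : lamk1 = lamk - γ • (B yk1 + C zk1 - b)) :
    ∀ (y : Y) (z : Z), B y + C z = b → ∀ lam : H,
      (f yk1 + g zk1 + h zk1) - (f y + g z + h z) - ⟪lam, B yk1 + C zk1 - b⟫
        ≤ -⟪(1 / γ) • (lamk - lamk1), lam - lamk + (β / γ) • (lamk - lamk1)⟫
          + β * ⟪(1 / γ) • (lamk - lamk1) - C (zk1 - z), C (zk1 - zk)⟫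
          + Lh / 2 * ‖zk1 - zk‖ ^ 2 - μh / 2 * ‖zk - z‖ ^ 2 - μg / 2 * ‖zk1 - z‖ ^ 2
          - ⟪yk1 - y, P (yk1 - yk)⟫ - ⟪zk1 - z, Q (zk1 - zk)⟫ := by
  intro y z hyz lam
  obtain ⟨u, hu, hue⟩ := hopty
  obtain ⟨v, hv, hve⟩ := hoptz
  set r : H := B yk1 + C zk1 - b with hr
  set r1 : H := B yk1 + C zk - b with hr1
  have hgr : lamk - lamk1 = γ • r := by rw [hlam]; abel
  have h1g : (1 / γ) • (lamk - lamk1) = r := by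
    rw [hgr, smul_smul, one_div_mul_cancel hγ.ne', one_smul]
  have hbg : (β / γ) • (lamk - lamk1) = β • r := by
    rw [hgr, smul_smul]
    congr 1
    field_simp
  have hBy : B (yk1 - y) = r - C (zk1 - z) := by
    have hby : B y = b - C z := by rw [← hyz]; abel
    simp only [map_sub, hby, hr]
    abel
  have hr1r : r1 = r - C (zk1 - zk) := by
    simp only [hr, hr1, map_sub]
    abel
  -- the u and v values
  have hu' : u = (ContinuousLinearMap.adjoint B) lamk
      - β • (ContinuousLinearMap.adjoint B) r1 - P (yk1 - yk) := by
    have heq : u - ((ContinuousLinearMap.adjoint B) lamk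
        - β • (ContinuousLinearMap.adjoint B) r1 - P (yk1 - yk))
        = u - (ContinuousLinearMap.adjoint B) lamk
        + β • (ContinuousLinearMap.adjoint B) r1 + P (yk1 - yk) := by abel
    rw [← sub_eq_zero, heq]
    exact hue
  have hv' : v = (ContinuousLinearMap.adjoint C) lamk - h' zk
      - β • (ContinuousLinearMap.adjoint C) r - Q (zk1 - zk) := by
    have heq : v - ((ContinuousLinearMap.adjoint C) lamk - h' zk
        - β • (ContinuousLinearMap.adjoint C) r - Q (zk1 - zk))
        = v + h' zk - (ContinuousLinearMap.adjoint C) lamk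
        + β • (ContinuousLinearMap.adjoint C) r + Q (zk1 - zk) := by abel
    rw [← sub_eq_zero, heq]
    exact hve
  -- f bound
  have hfb : f yk1 - f y ≤ ⟪lamk, B (yk1 - y)⟫ - β * ⟪r1, B (yk1 - y)⟫
      - ⟪P (yk1 - yk), yk1 - y⟫ := by
    have h1 := hu y
    have h2 : ⟪u, y - yk1⟫ = -⟪u, yk1 - y⟫ := by
      rw [← inner_neg_right]
      congr 1
      abel
    have h3 : ⟪u, yk1 - y⟫ = ⟪lamk, B (yk1 - y)⟫ - β * ⟪r1, B (yk1 - y)⟫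
        - ⟪P (yk1 - yk), yk1 - y⟫ := by
      rw [hu']
      simp only [inner_sub_left, real_inner_smul_left,
        ContinuousLinearMap.adjoint_inner_left]
    rw [h2, h3] at h1
    linarith
  -- g bound
  have hgsg := strong_subgrad g μg hg zk1 v hv z
  have hgb : g zk1 - g z ≤ ⟪lamk, C (zk1 - z)⟫ - ⟪h' zk, zk1 - z⟫
      - β * ⟪r, C (zk1 - z)⟫ - ⟪Q (zk1 - zk), zk1 - z⟫ - μg / 2 * ‖zk1 - z‖ ^ 2 := by
    have h2 : ⟪v, z - zk1⟫ = -⟪v, zk1 - z⟫ := by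
      rw [← inner_neg_right]
      congr 1
      abel
    have h3 : ⟪v, zk1 - z⟫ = ⟪lamk, C (zk1 - z)⟫ - ⟪h' zk, zk1 - z⟫
        - β * ⟪r, C (zk1 - z)⟫ - ⟪Q (zk1 - zk), zk1 - z⟫ := by
      rw [hv']
      simp only [inner_sub_left, real_inner_smul_left,
        ContinuousLinearMap.adjoint_inner_left]
    have h4 : ‖z - zk1‖ = ‖zk1 - z‖ := norm_sub_rev _ _
    rw [h2, h3, h4] at hgsg
    linarith
  -- h bounds
  have hcvh : ConvexOn ℝ Set.univ h := by
    have h0 := hh.add (convexOn_half_sq μh hμh)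
    have heq : ((fun z => h z - μh / 2 * ‖z‖ ^ 2) + fun z => μh / 2 * ‖z‖ ^ 2) = h := by
      funext w; simp
    rwa [heq] at h0
  have hhl : h zk + ⟪h' zk, z - zk⟫ + μh / 2 * ‖z - zk‖ ^ 2 ≤ h z :=
    strong_subgrad h μh hh zk (h' zk)
      (fun z' => grad_tangent h hcvh zk (h' zk) (hgrad zk) z') z
  have hhd : h zk1 ≤ h zk + ⟪h' zk, zk1 - zk⟫ + Lh / 2 * ‖zk1 - zk‖ ^ 2 := by
    have := descent_lemma_s10 h h' Lh hgrad hlip zk (zk1 - zk)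
    simpa using this
  have hsplit : ⟪h' zk, zk1 - zk⟫ - ⟪h' zk, z - zk⟫ = ⟪h' zk, zk1 - z⟫ := by
    rw [← inner_sub_right]
    congr 1
    abel
  have hnzk : ‖z - zk‖ = ‖zk - z‖ := norm_sub_rev _ _
  -- key algebraic identity
  have key : ⟪lamk, B (yk1 - y)⟫ - β * ⟪r1, B (yk1 - y)⟫
      + ⟪lamk, C (zk1 - z)⟫ - β * ⟪r, C (zk1 - z)⟫ - ⟪lam, r⟫
      = -⟪(1 / γ) • (lamk - lamk1), lam - lamk + (β / γ) • (lamk - lamk1)⟫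
        + β * ⟪(1 / γ) • (lamk - lamk1) - C (zk1 - z), C (zk1 - zk)⟫ := by
    rw [h1g, hbg, hBy, hr1r]
    exact key_id β lam lamk r (C (zk1 - z)) (C (zk1 - zk))
  -- P, Q inner symmetry (real inner product)
  have hPc : ⟪P (yk1 - yk), yk1 - y⟫ = ⟪yk1 - y, P (yk1 - yk)⟫ := real_inner_comm _ _
  have hQc : ⟪Q (zk1 - zk), zk1 - z⟫ = ⟪zk1 - z, Q (zk1 - zk)⟫ := real_inner_comm _ _
  have hnzk2 : ‖z - zk‖ ^ 2 = ‖zk - z‖ ^ 2 := by rw [hnzk]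
  rw [hnzk2] at hhl
  linarith [hfb, hgb, hhl, hhd, key, hsplit, hPc, hQc]
end
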